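/- Let m ≥ 11 be an integer and let x, y be integers with y ≥ 1 satisfying x⁵ − m·y⁵ = 1 or x⁵ − m·y⁵ = −1. Then |m^{1/5} − x/y| < 1/(2y²). -/

import Mathlib

/-- For an integer `m ≥ 11` and integers `x, y` with `y ≥ 1`
satisfying `x⁵ − m·y⁵ = ±1`, one has `|m^{1/5} − x/y| < 1/(2y²)`. -/
theorem stmt_8 (m : ℤ) (hm : 11 ≤ m) (x y : ℤ) (hy : 1 ≤ y)
    (h : x ^ 5 - m * y ^ 5 = 1 ∨ x ^ 5 - m * y ^ 5 = -1) :
    |(m : ℝ) ^ ((1 : ℝ) / 5) - (x : ℝ) / (y : ℝ)| < 1 / (2 * (y : ℝ) ^ 2) := by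
  have hy0 : (0:ℝ) < (y:ℝ) := by exact_mod_cast hy
  have hy1 : (1:ℝ) ≤ (y:ℝ) := by exact_mod_cast hy
  have hm0 : (0:ℝ) ≤ (m:ℝ) := by
    have : (11:ℝ) ≤ (m:ℝ) := by exact_mod_cast hm
    linarith
  set α : ℝ := (m:ℝ) ^ ((1:ℝ)/5) with hαdef
  have hα0 : 0 ≤ α := Real.rpow_nonneg hm0 _
  have hα5 : α ^ 5 = (m:ℝ) := by
    rw [hαdef, ← Real.rpow_natCast (((m:ℝ)) ^ ((1:ℝ)/5)) 5, ← Real.rpow_mul hm0]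
    norm_num
  have hy5 : (1:ℤ) ≤ y ^ 5 := by
    have := pow_le_pow_left₀ (by norm_num : (0:ℤ) ≤ 1) hy 5
    simpa using this
  -- x ≥ 1
  have hx1 : (1:ℤ) ≤ x := by
    by_contra hc
    push_neg at hc
    have hx0 : x ≤ 0 := by omega
    have : x ^ 5 ≤ 0 := Odd.pow_nonpos (by decide) hx0
    rcases h with h | h <;> nlinarith
  have hx0R : (0:ℝ) ≤ (x:ℝ) := by
    have : (1:ℝ) ≤ (x:ℝ) := by exact_mod_cast hx1
    linarith
  set r : ℝ := (x:ℝ) / (y:ℝ) with hrdef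
  have hr0 : 0 ≤ r := div_nonneg hx0R hy0.le
  -- α > 1.6
  have hαgt : (1.6:ℝ) < α := by
    have h11 : (11:ℝ) ≤ α ^ 5 := by rw [hα5]; exact_mod_cast hm
    have hpow : (1.6:ℝ) ^ 5 < α ^ 5 := by norm_num at h11 ⊢; linarith
    exact lt_of_pow_lt_pow_left₀ 5 hα0 hpow
  set S : ℝ := r^4 + r^3*α + r^2*α^2 + r*α^3 + α^4 with hSdef
  have hα4 : (1.6:ℝ)^4 < α^4 := pow_lt_pow_left₀ hαgt (by norm_num) (by norm_num)
  have hS2 : (2:ℝ) < S := by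
    have h1 : 0 ≤ r^4 := by positivity
    have h2 : 0 ≤ r^3*α := by positivity
    have h3 : 0 ≤ r^2*α^2 := by positivity
    have h4 : 0 ≤ r*α^3 := by positivity
    norm_num at hα4
    nlinarith
  have hS0 : (0:ℝ) < S := by linarith
  have key : (α - r) * S = α ^ 5 - r ^ 5 := by rw [hSdef]; ring
  have hr5 : r ^ 5 = (x:ℝ)^5 / (y:ℝ)^5 := by rw [hrdef, div_pow]
  have hy5pos : (0:ℝ) < (y:ℝ)^5 := by positivity
  have habs : |α - r| * S = 1 / (y:ℝ)^5 := by
    rw [← abs_of_pos hS0, ← abs_mul, key]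
    have hval : α^5 - r^5 = -(((x:ℝ)^5 - (m:ℝ)*(y:ℝ)^5))/(y:ℝ)^5 := by
      rw [hα5, hr5]
      field_simp
      ring
    rw [hval]
    rcases h with h | h
    · have hR : ((x:ℝ)^5 - (m:ℝ)*(y:ℝ)^5) = 1 := by exact_mod_cast h
      rw [hR, abs_div, abs_neg, abs_one, abs_of_pos hy5pos]
    · have hR : ((x:ℝ)^5 - (m:ℝ)*(y:ℝ)^5) = -1 := by exact_mod_cast h
      rw [hR, abs_div, abs_of_pos hy5pos]
      norm_num
  have hApos : 0 < |α - r| := by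
    by_contra hc
    push_neg at hc
    have hz : |α - r| = 0 := le_antisymm hc (abs_nonneg _)
    rw [hz, zero_mul] at habs
    have : (0:ℝ) < 1 / (y:ℝ)^5 := by positivity
    linarith
  have hy25 : (y:ℝ)^2 ≤ (y:ℝ)^5 := pow_le_pow_right₀ hy1 (by norm_num)
  rw [lt_div_iff₀ (by positivity : (0:ℝ) < 2 * (y:ℝ)^2)]
  have h1 : |α - r| * (S * (y:ℝ)^5) = 1 := by
    rw [← mul_assoc, habs]
    field_simp
  have t1 : |α - r| * (2*(y:ℝ)^2) ≤ |α - r| * (2*(y:ℝ)^5) :=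
    mul_le_mul_of_nonneg_left (by linarith) (abs_nonneg _)
  have t2 : |α - r| * (2*(y:ℝ)^5) < |α - r| * (S*(y:ℝ)^5) := by
    apply mul_lt_mul_of_pos_left _ hApos
    nlinarith
  linarith
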